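/- arXiv:1511.08905 — 3 statements merged into one kernel-verified Lean document; each statement's English description precedes it below -/
import Mathlib

section
/- Let g : R^n → R be convex and differentiable with L-Lipschitz gradient, and let x*, x^r, x^{r+1} ∈ R^n. Then ⟨x* − x^{r+1}, ∇g(x^r)⟩ ≤ (L/4)·‖x^r − x^{r+1}‖² + ⟨x* − x^{r+1}, ∇g(x*)⟩. -/
open RealInnerProductSpace

section aux

variable {n : ℕ}

private lemma chain_deriv (g : EuclideanSpace ℝ (Fin n) → ℝ)
    (G : EuclideanSpace ℝ (Fin n) → EuclideanSpace ℝ (Fin n))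
    (hgrad : ∀ x, HasGradientAt g (G x) x)
    (x v : EuclideanSpace ℝ (Fin n)) (t : ℝ) :
    HasDerivAt (fun s : ℝ => g (x + s • v)) ⟪G (x + t • v), v⟫ t := by
  have hc : HasDerivAt (fun s : ℝ => x + s • v) v t := by
    simpa using ((hasDerivAt_id t).smul_const v).const_add x
  have h1 : HasFDerivAt g (InnerProductSpace.toDual ℝ _ (G (x + t • v))) (x + t • v) :=
    (hgrad _).hasFDerivAt
  have := h1.comp_hasDerivAt t hc
  simpa [InnerProductSpace.toDual_apply_apply, Function.comp_def] using this

private lemma descent (g : EuclideanSpace ℝ (Fin n) → ℝ)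
    (G : EuclideanSpace ℝ (Fin n) → EuclideanSpace ℝ (Fin n))
    (L : ℝ) (hL : 0 < L)
    (hgrad : ∀ x, HasGradientAt g (G x) x)
    (hlip : ∀ x y, ‖G x - G y‖ ≤ L * ‖x - y‖)
    (x y : EuclideanSpace ℝ (Fin n)) :
    g y ≤ g x + ⟪G x, y - x⟫ + L / 2 * ‖y - x‖ ^ 2 := by
  set v := y - x with hv
  have hGcont : Continuous G := by
    have : LipschitzWith ⟨L, hL.le⟩ G :=
      LipschitzWith.of_dist_le_mul (fun a b => by rw [dist_eq_norm, dist_eq_norm]; exact hlip a b)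
    exact this.continuous
  have hcont : Continuous fun t : ℝ => (⟪G (x + t • v), v⟫ : ℝ) := by
    apply Continuous.inner
    · exact hGcont.comp (by continuity)
    · exact continuous_const
  have hint : g (x + (1:ℝ) • v) - g (x + (0:ℝ) • v)
      = ∫ t in (0:ℝ)..1, ⟪G (x + t • v), v⟫ := by
    refine (intervalIntegral.integral_eq_sub_of_hasDerivAt
      (fun t _ => chain_deriv g G hgrad x v t) ?_).symm
    exact hcont.intervalIntegrable 0 1
  have hbound : ∀ t ∈ Set.Icc (0:ℝ) 1,
      (⟪G (x + t • v), v⟫ : ℝ) ≤ ⟪G x, v⟫ + L * t * ‖v‖ ^ 2 := by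
    intro t ht
    have h1 : (⟪G (x + t • v) - G x, v⟫ : ℝ) ≤ ‖G (x + t • v) - G x‖ * ‖v‖ :=
      real_inner_le_norm _ _
    have h2 : ‖G (x + t • v) - G x‖ ≤ L * (t * ‖v‖) := by
      have := hlip (x + t • v) x
      simpa [norm_smul, abs_of_nonneg ht.1, mul_assoc] using this
    have h3 : ‖G (x + t • v) - G x‖ * ‖v‖ ≤ L * (t * ‖v‖) * ‖v‖ :=
      mul_le_mul_of_nonneg_right h2 (norm_nonneg _)
    have h4 : (⟪G (x + t • v), v⟫ : ℝ) = ⟪G x, v⟫ + ⟪G (x + t • v) - G x, v⟫ := by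
      rw [inner_sub_left]; ring
    rw [h4]; nlinarith [sq_nonneg ‖v‖]
  have hmono : (∫ t in (0:ℝ)..1, ⟪G (x + t • v), v⟫)
      ≤ ∫ t in (0:ℝ)..1, (⟪G x, v⟫ + L * t * ‖v‖ ^ 2) := by
    apply intervalIntegral.integral_mono_on zero_le_one
      (hcont.intervalIntegrable 0 1)
      ((by continuity : Continuous fun t : ℝ => (⟪G x, v⟫ : ℝ) + L * t * ‖v‖ ^ 2).intervalIntegrable 0 1)
    intro t ht
    exact hbound t ht
  have hval : (∫ t in (0:ℝ)..1, (⟪G x, v⟫ + L * t * ‖v‖ ^ 2)) = ⟪G x, v⟫ + L / 2 * ‖v‖ ^ 2 := by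
    have hfun : (fun t : ℝ => (⟪G x, v⟫ : ℝ) + L * t * ‖v‖ ^ 2)
        = fun t : ℝ => (⟪G x, v⟫ : ℝ) + (L * ‖v‖ ^ 2) * t := by
      funext t; ring
    rw [hfun, intervalIntegral.integral_add (f := fun _ => (⟪G x, v⟫ : ℝ)) (g := fun t : ℝ => L * ‖v‖ ^ 2 * t) intervalIntegrable_const
      ((continuous_const.mul continuous_id' : Continuous fun t : ℝ => L * ‖v‖ ^ 2 * t).intervalIntegrable 0 1)]
    rw [intervalIntegral.integral_const_mul, integral_id,
      intervalIntegral.integral_const]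
    norm_num
    ring
  have hfin : g y - g x ≤ ⟪G x, v⟫ + L / 2 * ‖v‖ ^ 2 := by
    simp only [one_smul, zero_smul, add_zero] at hint
    have hxy : x + v = y := by rw [hv]; abel
    rw [hxy] at hint
    rw [hint, ← hval]
    exact hmono
  linarith

private lemma first_order (g : EuclideanSpace ℝ (Fin n) → ℝ)
    (G : EuclideanSpace ℝ (Fin n) → EuclideanSpace ℝ (Fin n))
    (hconv : ConvexOn ℝ Set.univ g)
    (hgrad : ∀ x, HasGradientAt g (G x) x)
    (x z : EuclideanSpace ℝ (Fin n)) :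
    g x + ⟪G x, z - x⟫ ≤ g z := by
  set v := z - x with hv
  have hd : HasDerivAt (fun s : ℝ => g (x + s • v)) ⟪G x, v⟫ 0 := by
    simpa using chain_deriv g G hgrad x v 0
  have hslope : Filter.Tendsto (slope (fun s : ℝ => g (x + s • v)) 0) (nhdsWithin 0 (Set.Ioi 0))
      (nhds (⟪G x, v⟫ : ℝ)) := by
    have := hasDerivAt_iff_tendsto_slope.mp hd
    exact this.mono_left (nhdsWithin_mono 0 (fun t ht => by
      simp only [Set.mem_compl_iff, Set.mem_singleton_iff]
      exact ne_of_gt ht))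
  have key : (⟪G x, v⟫ : ℝ) ≤ g z - g x := by
    refine le_of_tendsto hslope ?_
    filter_upwards [Ioo_mem_nhdsGT_of_mem
      (Set.mem_Ico.mpr ⟨le_refl (0:ℝ), zero_lt_one⟩)] with t ht
    obtain ⟨ht0, ht1⟩ := ht
    have hc := hconv.2 (Set.mem_univ x) (Set.mem_univ z) (by linarith : (0:ℝ) ≤ 1 - t)
      (le_of_lt ht0) (by ring)
    have hxt : (1 - t) • x + t • z = x + t • v := by
      rw [hv]; module
    rw [hxt] at hc
    have hsl : slope (fun s : ℝ => g (x + s • v)) 0 t = (g (x + t • v) - g x) / t := by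
      rw [slope_def_field]; simp
    rw [hsl, div_le_iff₀ ht0]
    simp only [smul_eq_mul] at hc
    nlinarith [hc]
  linarith

private lemma coco_half (g : EuclideanSpace ℝ (Fin n) → ℝ)
    (G : EuclideanSpace ℝ (Fin n) → EuclideanSpace ℝ (Fin n))
    (L : ℝ) (hL : 0 < L)
    (hconv : ConvexOn ℝ Set.univ g)
    (hgrad : ∀ x, HasGradientAt g (G x) x)
    (hlip : ∀ x y, ‖G x - G y‖ ≤ L * ‖x - y‖)
    (x y : EuclideanSpace ℝ (Fin n)) :
    g x + ⟪G x, y - x⟫ + 1 / (2 * L) * ‖G y - G x‖ ^ 2 ≤ g y := by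
  set w := y - (1 / L) • (G y - G x) with hw
  have h1 := first_order g G hconv hgrad x w
  have h2 := descent g G L hL hgrad hlip y w
  have hwy : w - y = -((1 / L) • (G y - G x)) := by rw [hw]; abel
  have hnorm : ‖w - y‖ ^ 2 = (1 / L) ^ 2 * ‖G y - G x‖ ^ 2 := by
    rw [hwy, norm_neg, norm_smul]
    rw [mul_pow]
    congr 1
    rw [Real.norm_eq_abs, sq_abs]
  have hiy : (⟪G y, w - y⟫ : ℝ) = -(1 / L) * ⟪G y, G y - G x⟫ := by
    rw [hwy, inner_neg_right, real_inner_smul_right]; ring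
  have hix : (⟪G x, w - x⟫ : ℝ) = ⟪G x, y - x⟫ - (1 / L) * ⟪G x, G y - G x⟫ := by
    have : w - x = (y - x) - (1 / L) • (G y - G x) := by rw [hw]; abel
    rw [this, inner_sub_right, real_inner_smul_right]
  have hself : (⟪G y - G x, G y - G x⟫ : ℝ) = ‖G y - G x‖ ^ 2 :=
    real_inner_self_eq_norm_sq _
  have hexp : (⟪G y, G y - G x⟫ : ℝ) - ⟪G x, G y - G x⟫ = ‖G y - G x‖ ^ 2 := by
    rw [← inner_sub_left, hself]
  rw [hix] at h1
  rw [hiy, hnorm] at h2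
  have hL' : L ≠ 0 := ne_of_gt hL
  have key : (1 / L) * ⟪G y, G y - G x⟫ - (1 / L) * ⟪G x, G y - G x⟫
      = (1 / L) * ‖G y - G x‖ ^ 2 := by rw [← mul_sub, hexp]
  have e1 : L / 2 * ((1 / L) ^ 2 * ‖G y - G x‖ ^ 2) = 1 / (2 * L) * ‖G y - G x‖ ^ 2 := by
    field_simp
  have e2 : 1 / L * ‖G y - G x‖ ^ 2
      = 1 / (2 * L) * ‖G y - G x‖ ^ 2 + 1 / (2 * L) * ‖G y - G x‖ ^ 2 := by
    field_simp
    ring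
  linarith [h1, h2, key, e1]

end aux

theorem stmt6 {n : ℕ} (g : EuclideanSpace ℝ (Fin n) → ℝ)
    (G : EuclideanSpace ℝ (Fin n) → EuclideanSpace ℝ (Fin n))
    (L : ℝ) (hL : 0 < L)
    (hconv : ConvexOn ℝ Set.univ g)
    (hgrad : ∀ x, HasGradientAt g (G x) x)
    (hlip : ∀ x y, ‖G x - G y‖ ≤ L * ‖x - y‖)
    (xs xr xr1 : EuclideanSpace ℝ (Fin n)) :
    ⟪xs - xr1, G xr⟫ ≤ L / 4 * ‖xr - xr1‖ ^ 2 + ⟪xs - xr1, G xs⟫ := by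
  have h1 := coco_half g G L hL hconv hgrad hlip xs xr
  have h2 := coco_half g G L hL hconv hgrad hlip xr xs
  -- cocoercivity
  have coco : (1 / L) * ‖G xr - G xs‖ ^ 2 ≤ ⟪xs - xr, G xs - G xr⟫ := by
    have hs : ‖G xs - G xr‖ = ‖G xr - G xs‖ := by rw [norm_sub_rev]
    have hi1 : (⟪G xs, xr - xs⟫ : ℝ) + ⟪G xr, xs - xr⟫ =
        -(⟪xs - xr, G xs - G xr⟫ : ℝ) := by
      have c1 : (⟪G xs, xr - xs⟫ : ℝ) = ⟪xr - xs, G xs⟫ := real_inner_comm _ _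
      have c2 : (⟪G xr, xs - xr⟫ : ℝ) = ⟪xs - xr, G xr⟫ := real_inner_comm _ _
      rw [c1, c2, inner_sub_right]
      have : (⟪xr - xs, G xs⟫ : ℝ) = -⟪xs - xr, G xs⟫ := by
        rw [← inner_neg_left]; congr 1; abel
      rw [this]; ring
    rw [hs] at h2
    have e : 1 / L * ‖G xr - G xs‖ ^ 2
        = 1 / (2 * L) * ‖G xr - G xs‖ ^ 2 + 1 / (2 * L) * ‖G xr - G xs‖ ^ 2 := by
      field_simp
      ring
    linarith [h1, h2, hi1, e]
  -- split and Young
  have hsplit : (⟪xs - xr1, G xr - G xs⟫ : ℝ)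
      = ⟪xs - xr, G xr - G xs⟫ + ⟪xr - xr1, G xr - G xs⟫ := by
    rw [← inner_add_left]; congr 1; abel
  have hxy : (⟪xr - xr1, G xr - G xs⟫ : ℝ) ≤ ‖xr - xr1‖ * ‖G xr - G xs‖ :=
    real_inner_le_norm _ _
  have hneg : (⟪xs - xr, G xr - G xs⟫ : ℝ) = -⟪xs - xr, G xs - G xr⟫ := by
    rw [← inner_neg_right]; congr 1; abel
  have young : ‖xr - xr1‖ * ‖G xr - G xs‖
      ≤ L / 4 * ‖xr - xr1‖ ^ 2 + (1 / L) * ‖G xr - G xs‖ ^ 2 := by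
    have h := sq_nonneg (L * ‖xr - xr1‖ - 2 * ‖G xr - G xs‖)
    have hL4 : 0 < 4 * L := by linarith
    rw [← sub_nonneg]
    have : L / 4 * ‖xr - xr1‖ ^ 2 + 1 / L * ‖G xr - G xs‖ ^ 2 - ‖xr - xr1‖ * ‖G xr - G xs‖
        = (L * ‖xr - xr1‖ - 2 * ‖G xr - G xs‖) ^ 2 / (4 * L) := by
      field_simp; ring
    rw [this]
    positivity
  have hfinal : (⟪xs - xr1, G xr - G xs⟫ : ℝ) ≤ L / 4 * ‖xr - xr1‖ ^ 2 := by
    rw [hsplit, hneg]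
    linarith
  have : (⟪xs - xr1, G xr - G xs⟫ : ℝ) = ⟪xs - xr1, G xr⟫ - ⟪xs - xr1, G xs⟫ :=
    inner_sub_right _ _ _
  linarith [hfinal, this.symm.le]
end

section
/- Let f : R^n → R be convex, let F : R^{n+m+p} → R^{n+m+p} be the affine map F(x,z,λ) = (Aᵀλ, Bᵀλ, −(Ax+Bz)) and let w* = (x*,z*,λ*) with Ax*+Bz*=0. If for points w^1,...,w^{r+1} the inequality f(x*) − f(x^t) + ⟨w̃ − w^t, F(w^t)⟩ ≥ c_t holds for t=1,...,r+1 (with w̃ = (x*,z*,λ) for some fixed λ and reals c_t), then for the average w̄ = (1/(r+1))∑_{t=1}^{r+1} w^t one has f(x*) − f(x̄) + ⟨w̃ − w̄, F(w̄)⟩ ≥ (1/(r+1))∑_{t=1}^{r+1} c_t. -/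
open Matrix

-- helper lemmas
theorem dot_sum {m : ℕ} (v : Fin m → ℝ) (s : Finset ℕ) (w : ℕ → Fin m → ℝ) :
    v ⬝ᵥ (∑ t ∈ s, w t) = ∑ t ∈ s, v ⬝ᵥ w t := by
  simp [dotProduct, Finset.mul_sum]
  exact Finset.sum_comm

theorem mulVec_sum' {m n : ℕ} (A : Matrix (Fin m) (Fin n) ℝ) (s : Finset ℕ) (w : ℕ → Fin n → ℝ) :
    A.mulVec (∑ t ∈ s, w t) = ∑ t ∈ s, A.mulVec (w t) := by
  ext i
  simp [Matrix.mulVec, dotProduct, Finset.mul_sum]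
  exact Finset.sum_comm

theorem key {n1 n2 m : ℕ}
    (A : Matrix (Fin m) (Fin n1) ℝ) (B : Matrix (Fin m) (Fin n2) ℝ)
    (xs : Fin n1 → ℝ) (zs : Fin n2 → ℝ) (lfix : Fin m → ℝ)
    (hfeas : A.mulVec xs + B.mulVec zs = 0)
    (x : Fin n1 → ℝ) (z : Fin n2 → ℝ) (l : Fin m → ℝ) :
    (xs - x) ⬝ᵥ Aᵀ.mulVec l + (zs - z) ⬝ᵥ Bᵀ.mulVec l
      + (lfix - l) ⬝ᵥ (-(A.mulVec x + B.mulVec z))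
    = -(lfix ⬝ᵥ (A.mulVec x + B.mulVec z)) := by
  have h1 : ∀ (v : Fin n1 → ℝ) (u : Fin m → ℝ), v ⬝ᵥ Aᵀ.mulVec u = u ⬝ᵥ A.mulVec v := by
    intro v u
    rw [Matrix.dotProduct_mulVec, Matrix.vecMul_transpose, dotProduct_comm]
  have h2 : ∀ (v : Fin n2 → ℝ) (u : Fin m → ℝ), v ⬝ᵥ Bᵀ.mulVec u = u ⬝ᵥ B.mulVec v := by
    intro v u
    rw [Matrix.dotProduct_mulVec, Matrix.vecMul_transpose, dotProduct_comm]
  have hfeas' : l ⬝ᵥ (A.mulVec xs + B.mulVec zs) = 0 := by rw [hfeas]; simp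
  simp only [sub_dotProduct, dotProduct_neg, dotProduct_add, Matrix.mulVec_sub, dotProduct_sub, h1, h2] at *
  linarith

theorem stmt14 {n1 n2 m : ℕ} (f : (Fin n1 → ℝ) → ℝ) (hf : ConvexOn ℝ Set.univ f)
    (A : Matrix (Fin m) (Fin n1) ℝ) (B : Matrix (Fin m) (Fin n2) ℝ)
    (xs : Fin n1 → ℝ) (zs : Fin n2 → ℝ) (lfix : Fin m → ℝ)
    (hfeas : A.mulVec xs + B.mulVec zs = 0)
    (r : ℕ) (x : ℕ → Fin n1 → ℝ) (z : ℕ → Fin n2 → ℝ) (l : ℕ → Fin m → ℝ) (c : ℕ → ℝ)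
    (hstep : ∀ t ∈ Finset.Icc 1 (r + 1),
      c t ≤ f xs - f (x t)
        + ((xs - x t) ⬝ᵥ Aᵀ.mulVec (l t) + (zs - z t) ⬝ᵥ Bᵀ.mulVec (l t)
          + (lfix - l t) ⬝ᵥ (-(A.mulVec (x t) + B.mulVec (z t))))) :
    ((r : ℝ) + 1)⁻¹ * ∑ t ∈ Finset.Icc 1 (r + 1), c t ≤
      f xs - f (((r : ℝ) + 1)⁻¹ • ∑ t ∈ Finset.Icc 1 (r + 1), x t)
        + ((xs - ((r : ℝ) + 1)⁻¹ • ∑ t ∈ Finset.Icc 1 (r + 1), x t) ⬝ᵥ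
              Aᵀ.mulVec (((r : ℝ) + 1)⁻¹ • ∑ t ∈ Finset.Icc 1 (r + 1), l t)
          + (zs - ((r : ℝ) + 1)⁻¹ • ∑ t ∈ Finset.Icc 1 (r + 1), z t) ⬝ᵥ
              Bᵀ.mulVec (((r : ℝ) + 1)⁻¹ • ∑ t ∈ Finset.Icc 1 (r + 1), l t)
          + (lfix - ((r : ℝ) + 1)⁻¹ • ∑ t ∈ Finset.Icc 1 (r + 1), l t) ⬝ᵥ
              (-(A.mulVec (((r : ℝ) + 1)⁻¹ • ∑ t ∈ Finset.Icc 1 (r + 1), x t)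
                + B.mulVec (((r : ℝ) + 1)⁻¹ • ∑ t ∈ Finset.Icc 1 (r + 1), z t)))) := by
  set s : Finset ℕ := Finset.Icc 1 (r + 1) with hs
  set c0 : ℝ := ((r : ℝ) + 1)⁻¹ with hc0def
  have hc0 : 0 ≤ c0 := by positivity
  have hcard : s.card = r + 1 := by simp [hs]
  have hsum1 : ∑ _t ∈ s, c0 = 1 := by
    rw [Finset.sum_const, hcard, nsmul_eq_mul, hc0def]
    field_simp
    exact Nat.cast_succ r
  -- rewrite the bilinear part at the average
  rw [key A B xs zs lfix hfeas]
  -- pointwise bound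
  have hpt : ∀ t ∈ s, c t ≤ f xs - f (x t) - lfix ⬝ᵥ (A.mulVec (x t) + B.mulVec (z t)) := by
    intro t ht
    have := hstep t ht
    rwa [key A B xs zs lfix hfeas] at this
  -- linearity of the penalty term
  have hlin : lfix ⬝ᵥ (A.mulVec (c0 • ∑ t ∈ s, x t) + B.mulVec (c0 • ∑ t ∈ s, z t))
      = c0 * ∑ t ∈ s, lfix ⬝ᵥ (A.mulVec (x t) + B.mulVec (z t)) := by
    rw [Matrix.mulVec_smul, Matrix.mulVec_smul, mulVec_sum', mulVec_sum']
    simp only [dotProduct_add, dotProduct_smul, dot_sum, smul_eq_mul]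
    rw [Finset.sum_add_distrib]
    ring
  -- Jensen
  have hjen : f (c0 • ∑ t ∈ s, x t) ≤ ∑ t ∈ s, c0 * f (x t) := by
    have := hf.map_sum_le (t := s) (w := fun _ => c0) (p := fun t => x t)
      (fun i _ => hc0) hsum1 (fun i _ => Set.mem_univ _)
    simpa [Finset.smul_sum, smul_eq_mul] using this
  -- combine
  have hsum : ∑ t ∈ s, c t ≤ ∑ t ∈ s, (f xs - f (x t) - lfix ⬝ᵥ (A.mulVec (x t) + B.mulVec (z t))) :=
    Finset.sum_le_sum hpt
  have hmul : c0 * ∑ t ∈ s, c t ≤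
      c0 * ∑ t ∈ s, (f xs - f (x t) - lfix ⬝ᵥ (A.mulVec (x t) + B.mulVec (z t))) :=
    mul_le_mul_of_nonneg_left hsum hc0
  have hexp : c0 * ∑ t ∈ s, (f xs - f (x t) - lfix ⬝ᵥ (A.mulVec (x t) + B.mulVec (z t)))
      = f xs - (∑ t ∈ s, c0 * f (x t)) - c0 * ∑ t ∈ s, lfix ⬝ᵥ (A.mulVec (x t) + B.mulVec (z t)) := by
    rw [Finset.mul_sum]
    simp only [mul_sub]
    rw [Finset.sum_sub_distrib, Finset.sum_sub_distrib, ← Finset.mul_sum]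
    have hone : c0 * ∑ _i ∈ s, f xs = f xs := by
      rw [Finset.sum_const, hcard, nsmul_eq_mul, hc0def]
      push_cast; field_simp
    rw [hone, Finset.mul_sum]
  rw [hlin]
  calc c0 * ∑ t ∈ s, c t ≤ _ := hmul
    _ = f xs - (∑ t ∈ s, c0 * f (x t)) - c0 * ∑ t ∈ s, lfix ⬝ᵥ (A.mulVec (x t) + B.mulVec (z t)) := hexp
    _ ≤ f xs - f (c0 • ∑ t ∈ s, x t) - c0 * ∑ t ∈ s, lfix ⬝ᵥ (A.mulVec (x t) + B.mulVec (z t)) := by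
        linarith
    _ = _ := by ring
end

section
/- Let g : R^n → R be convex differentiable with L-Lipschitz gradient, let ν ∈ (0,1], and let x^{ag}, x_old^{ag}, x, x_old, x*, x^{md} ∈ R^n satisfy x^{md} = (1−ν)·x_old^{ag} + ν·x_old and x^{ag} = (1−ν)·x_old^{ag} + ν·x. Then g(x^{ag}) − (1−ν)·g(x_old^{ag}) ≤ ν·g(x*) + ν·⟨∇g(x^{md}), x − x*⟩ + (ν²L/2)·‖x − x_old‖². -/
open RealInnerProductSpace

section aux

variable {E : Type*} [NormedAddCommGroup E] [InnerProductSpace ℝ E] [CompleteSpace E]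

lemma line_hasDerivAt (g : E → ℝ) (G : E → E) (hgrad : ∀ x, HasGradientAt g (G x) x)
    (x v : E) (t : ℝ) :
    HasDerivAt (fun s : ℝ => g (x + s • v)) ⟪G (x + t • v), v⟫ t := by
  have h1 : HasDerivAt (fun s : ℝ => x + s • v) v t := by
    simpa using ((hasDerivAt_id t).smul_const v).const_add x
  have h2 := (hgrad (x + t • v)).hasFDerivAt.comp_hasDerivAt t h1
  have heq : (InnerProductSpace.toDual ℝ E) (G (x + t • v)) v = ⟪G (x + t • v), v⟫ := rfl
  rw [← heq]
  exact h2

lemma convex_first_order (g : E → ℝ) (G : E → E) (hconv : ConvexOn ℝ Set.univ g)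
    (hgrad : ∀ x, HasGradientAt g (G x) x) (x y : E) :
    g x + ⟪G x, y - x⟫ ≤ g y := by
  set v := y - x with hv
  have hd : HasDerivAt (fun s : ℝ => g (x + s • v)) ⟪G x, v⟫ 0 := by
    simpa using line_hasDerivAt g G hgrad x v 0
  have hslope : Filter.Tendsto (slope (fun s : ℝ => g (x + s • v)) 0) (nhdsWithin 0 {(0:ℝ)}ᶜ)
      (nhds ⟪G x, v⟫) := hasDerivAt_iff_tendsto_slope.mp hd
  have hslope' : Filter.Tendsto (slope (fun s : ℝ => g (x + s • v)) 0)
      (nhdsWithin 0 (Set.Ioi (0:ℝ))) (nhds ⟪G x, v⟫) :=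
    hslope.mono_left (nhdsWithin_mono 0 (fun t ht => ne_of_gt ht))
  have hbound : ∀ᶠ t in nhdsWithin (0:ℝ) (Set.Ioi 0),
      slope (fun s : ℝ => g (x + s • v)) 0 t ≤ g y - g x := by
    filter_upwards [Ioc_mem_nhdsGT_of_mem (Set.mem_Ico.mpr ⟨le_refl (0:ℝ), one_pos⟩)]
      with t ht
    obtain ⟨ht0, ht1⟩ := ht
    have hpt : x + t • v = (1 - t) • x + t • y := by
      rw [hv]; module
    have hcvx : g (x + t • v) ≤ (1 - t) * g x + t * g y := by
      rw [hpt]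
      exact hconv.2 (Set.mem_univ x) (Set.mem_univ y) (by linarith) (le_of_lt ht0) (by ring)
    rw [slope_def_field, div_le_iff₀ (by linarith : (0:ℝ) < t - 0)]
    simp only [zero_smul, add_zero, sub_zero]
    nlinarith
  have := le_of_tendsto hslope' hbound
  linarith

lemma descent_lemma (g : E → ℝ) (G : E → E) (L : ℝ) (hL : 0 < L)
    (hgrad : ∀ x, HasGradientAt g (G x) x)
    (hlip : ∀ x y, ‖G x - G y‖ ≤ L * ‖x - y‖) (x y : E) :
    g y ≤ g x + ⟪G x, y - x⟫ + L / 2 * ‖y - x‖ ^ 2 := by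
  set v := y - x with hv
  have hGcont : Continuous G := by
    refine (LipschitzWith.of_dist_le_mul (K := L.toNNReal) (f := G) ?_).continuous
    intro a b
    rw [dist_eq_norm, dist_eq_norm, Real.coe_toNNReal _ hL.le]
    exact hlip a b
  have hcont : Continuous fun t : ℝ => ⟪G (x + t • v), v⟫ :=
    Continuous.inner (hGcont.comp (by continuity)) continuous_const
  have hint : g (x + (1:ℝ) • v) - g (x + (0:ℝ) • v)
      = ∫ t in (0:ℝ)..1, ⟪G (x + t • v), v⟫ :=
    (intervalIntegral.integral_eq_sub_of_hasDerivAt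
      (fun t _ => line_hasDerivAt g G hgrad x v t) (hcont.intervalIntegrable 0 1)).symm
  have hbound : ∀ t ∈ Set.Icc (0:ℝ) 1, ⟪G (x + t • v), v⟫ ≤ ⟪G x, v⟫ + L * t * ‖v‖ ^ 2 := by
    intro t ht
    have h1 : ⟪G (x + t • v) - G x, v⟫ ≤ ‖G (x + t • v) - G x‖ * ‖v‖ :=
      real_inner_le_norm _ _
    have h2 : ‖G (x + t • v) - G x‖ ≤ L * (t * ‖v‖) := by
      have := hlip (x + t • v) x
      simpa [norm_smul, abs_of_nonneg ht.1, mul_assoc] using this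
    have h3 : ‖G (x + t • v) - G x‖ * ‖v‖ ≤ L * (t * ‖v‖) * ‖v‖ :=
      mul_le_mul_of_nonneg_right h2 (norm_nonneg _)
    have h4 : ⟪G (x + t • v) - G x, v⟫ = ⟪G (x + t • v), v⟫ - ⟪G x, v⟫ :=
      inner_sub_left _ _ _
    nlinarith [sq_nonneg (t * ‖v‖)]
  have hmono : (∫ t in (0:ℝ)..1, ⟪G (x + t • v), v⟫)
      ≤ ∫ t in (0:ℝ)..1, (⟪G x, v⟫ + L * t * ‖v‖ ^ 2) := by
    apply intervalIntegral.integral_mono_on (by norm_num)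
      (hcont.intervalIntegrable 0 1)
      ((by continuity : Continuous fun t : ℝ => ⟪G x, v⟫ + L * t * ‖v‖ ^ 2).intervalIntegrable 0 1)
    exact hbound
  have hval : (∫ t in (0:ℝ)..1, (⟪G x, v⟫ + L * t * ‖v‖ ^ 2))
      = ⟪G x, v⟫ + L / 2 * ‖v‖ ^ 2 := by
    have hfun : (fun t : ℝ => ⟪G x, v⟫ + L * t * ‖v‖ ^ 2)
        = fun t : ℝ => ⟪G x, v⟫ + (L * ‖v‖ ^ 2) * t := by
      funext t; ring
    rw [hfun, intervalIntegral.integral_add (intervalIntegrable_const)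
      ((show Continuous fun t : ℝ => (L * ‖v‖ ^ 2) * t from continuous_const.mul continuous_id').intervalIntegrable 0 1),
      intervalIntegral.integral_const_mul, integral_id]
    simp only [intervalIntegral.integral_const, smul_eq_mul]
    ring
  have h0 : x + (0:ℝ) • v = x := by simp
  have h1 : x + (1:ℝ) • v = y := by rw [hv]; simp
  rw [h0, h1] at hint
  linarith

end aux

theorem stmt19 {E : Type*} [NormedAddCommGroup E] [InnerProductSpace ℝ E] [CompleteSpace E]
    (g : E → ℝ) (G : E → E) (L : ℝ) (hL : 0 < L)
    (hconv : ConvexOn ℝ Set.univ g)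
    (hgrad : ∀ x, HasGradientAt g (G x) x)
    (hlip : ∀ x y, ‖G x - G y‖ ≤ L * ‖x - y‖)
    (ν : ℝ) (hν : ν ∈ Set.Ioc (0 : ℝ) 1)
    (xag xagold xcur xold xs xmd : E)
    (hmd : xmd = (1 - ν) • xagold + ν • xold)
    (hag : xag = (1 - ν) • xagold + ν • xcur) :
    g xag - (1 - ν) * g xagold
      ≤ ν * g xs + ν * ⟪G xmd, xcur - xs⟫ + ν ^ 2 * L / 2 * ‖xcur - xold‖ ^ 2 := by
  obtain ⟨hν0, hν1⟩ := hν
  have hvec : xag - xmd = ν • (xcur - xold) := by rw [hag, hmd]; module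
  have hdesc := descent_lemma g G L hL hgrad hlip xmd xag
  rw [hvec] at hdesc
  have hnorm : ‖ν • (xcur - xold)‖ ^ 2 = ν ^ 2 * ‖xcur - xold‖ ^ 2 := by
    rw [norm_smul]; simp [abs_of_pos hν0]; ring
  have hinner1 : ⟪G xmd, ν • (xcur - xold)⟫ = ν * ⟪G xmd, xcur - xold⟫ :=
    real_inner_smul_right _ _ _
  have hconv1 := convex_first_order g G hconv hgrad xmd xagold
  have hconv2 := convex_first_order g G hconv hgrad xmd xs
  have hv2 : xagold - xmd = ν • (xagold - xold) := by rw [hmd]; module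
  have hv3 : xs - xmd = (xs - xold) - (1 - ν) • (xagold - xold) := by rw [hmd]; module
  rw [hv2, real_inner_smul_right] at hconv1
  rw [hv3, inner_sub_right, real_inner_smul_right] at hconv2
  have hsplit : ⟪G xmd, xcur - xold⟫ = ⟪G xmd, xcur - xs⟫ + ⟪G xmd, xs - xold⟫ := by
    rw [← inner_add_right]; congr 1; abel
  rw [hnorm, hinner1, hsplit] at hdesc
  have hc1 : (1 - ν) * (g xmd + ν * ⟪G xmd, xagold - xold⟫) ≤ (1 - ν) * g xagold :=
    mul_le_mul_of_nonneg_left hconv1 (by linarith)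
  have hc2 : ν * (g xmd + (⟪G xmd, xs - xold⟫ - (1 - ν) * ⟪G xmd, xagold - xold⟫)) ≤ ν * g xs :=
    mul_le_mul_of_nonneg_left hconv2 hν0.le
  nlinarith [hdesc, hc1, hc2]
end
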